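/- Let X be a 2-connected finite topological graph and let x, y ∈ X be distinct points. Then the map ι_{x,y} : P_x → π₀(X ∖ {x, y}) is surjective. Consequently, the number of connected components of X ∖ {x, y} is at most deg(x), and ι_{x,y} is bijective if and only if deg(x) equals the number of connected components of X ∖ {x, y}. -/
import Mathlib


open Set Topology

namespace TreesOfGraphs

/-- Gluing relation defining the geometric realization of a finite multigraph:
each endpoint of each edge interval is glued to its assigned vertex. -/
def GraphGlueRel (V E : Type) (ends : E → V × V) :
    (V ⊕ E × unitInterval) → (V ⊕ E × unitInterval) → Prop := fun a b =>
  (∃ e : E, a = Sum.inl (ends e).1 ∧ b = Sum.inr (e, 0)) ∨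
  (∃ e : E, a = Sum.inl (ends e).2 ∧ b = Sum.inr (e, 1))

/-- The geometric realization of the finite multigraph with vertex type `V`,
edge type `E` and endpoint assignment `ends`. -/
def GraphRealization (V E : Type) (ends : E → V × V) : Type :=
  Quot (GraphGlueRel V E ends)

noncomputable instance (V E : Type) (ends : E → V × V) :
    TopologicalSpace (GraphRealization V E ends) :=
  letI : TopologicalSpace V := ⊥
  letI : TopologicalSpace E := ⊥
  inferInstanceAs (TopologicalSpace (Quot (GraphGlueRel V E ends)))

/-- A topological space is a finite topological graph if it is homeomorphic to the
geometric realization of a finite multigraph. -/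
def IsFiniteTopGraph (X : Type*) [TopologicalSpace X] : Prop :=
  ∃ (V E : Type) (_ : Fintype V) (_ : Fintype E) (ends : E → V × V),
    Nonempty (X ≃ₜ GraphRealization V E ends)

/-- The number of connected components of a subset `S` of a topological space. -/
noncomputable def numComponents {X : Type*} [TopologicalSpace X] (S : Set X) : ℕ :=
  Nat.card (ConnectedComponents ↥S)

/-- `DegreeAt x n` : every sufficiently small connected open neighbourhood `U` of `x`
satisfies that `U \ {x}` has exactly `n` connected components. -/
def DegreeAt {X : Type*} [TopologicalSpace X] (x : X) (n : ℕ) : Prop :=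
  ∃ U₀ ∈ 𝓝 x, ∀ U : Set X, U ⊆ U₀ → IsOpen U → x ∈ U → IsConnected U →
    numComponents (U \ {x}) = n

open Classical in
/-- The degree of a point of a (finite topological graph) space. -/
noncomputable def degree {X : Type*} [TopologicalSpace X] (x : X) : ℕ :=
  if h : ∃ n, DegreeAt x n then h.choose else 0

/-- A space is 2-connected if it is nonempty, has more than one point, is connected,
and has no cutpoint. -/
def TwoConnected (X : Type*) [TopologicalSpace X] : Prop :=
  Nonempty X ∧ Nontrivial X ∧ ConnectedSpace X ∧
    ∀ p : X, IsConnected ({p}ᶜ : Set X)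

/-- Two points are twins if they are distinct, have equal degrees, and their common degree
equals the number of connected components of the complement of the pair. -/
def AreTwins {X : Type*} [TopologicalSpace X] (x y : X) : Prop :=
  x ≠ y ∧ degree x = degree y ∧ numComponents (({x, y} : Set X)ᶜ) = degree x

/-- A twin graph is a 2-connected finite topological graph in which every point has a twin. -/
def IsTwinGraph (X : Type*) [TopologicalSpace X] : Prop :=
  IsFiniteTopGraph X ∧ TwoConnected X ∧ ∀ x : X, ∃ y : X, AreTwins x y

/-- An essential twin pair: a pair of twins, both of degree at least 3. -/
def IsEssentialTwinPair {X : Type*} [TopologicalSpace X] (x y : X) : Prop :=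
  AreTwins x y ∧ 3 ≤ degree x ∧ 3 ≤ degree y

/-- The map on connected components induced by an inclusion of subsets. -/
noncomputable def inclComponentsMap {X : Type*} [TopologicalSpace X] {S T : Set X}
    (h : S ⊆ T) : ConnectedComponents ↥S → ConnectedComponents ↥T :=
  Continuous.connectedComponentsLift
    (ConnectedComponents.continuous_coe.comp (continuous_inclusion h))

/-- A sufficiently small connected open neighbourhood of `x`, suitable for reading off
the local branches of the space at `x`: arbitrarily small connected open neighbourhoods
of `x` have their punctured components in bijection (via inclusion)
with those of the punctured carrier. -/
structure BranchNbhd {X : Type*} [TopologicalSpace X] (x : X) where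
  carrier : Set X
  isOpen' : IsOpen carrier
  mem' : x ∈ carrier
  conn' : IsConnected carrier
  stable' : ∀ V ∈ 𝓝 x, ∃ W : Set X, ∃ hWc : W ⊆ carrier, W ⊆ V ∧ IsOpen W ∧ x ∈ W ∧
    IsConnected W ∧ Function.Bijective
      (inclComponentsMap (Set.diff_subset_diff_left hWc : W \ {x} ⊆ carrier \ {x}))

/-- The blow-up divisor at `x` (relative to the branch neighbourhood `B`): the set of
local branches of the space at `x`. -/
def Divisor {X : Type*} [TopologicalSpace X] {x : X} (B : BranchNbhd x) : Type _ :=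
  ConnectedComponents ↥(B.carrier \ {x})

/-- The map sending each local branch at `x` to the connected component of `X ∖ {x, y}`
containing it. -/
noncomputable def iotaMap {X : Type*} [TopologicalSpace X] {x : X} (B : BranchNbhd x)
    (y : X) (hy : y ∉ B.carrier) :
    Divisor B → ConnectedComponents ↥(({x, y} : Set X)ᶜ) :=
  inclComponentsMap (fun z hz => by
    rcases hz with ⟨hzB, hzx⟩
    simp only [Set.mem_compl_iff, Set.mem_insert_iff, Set.mem_singleton_iff, not_or]
    exact ⟨by simpa using hzx, fun h => hy (h ▸ hzB)⟩)



section General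
variable {X : Type*} [TopologicalSpace X]

/-- relative-clopen piece of a punctured preconnected set has the puncture in its closure -/
lemma mem_closure_of_piece {U C : Set X} {x : X}
    (hU : IsPreconnected U) (hxU : x ∈ U) (hCopen : IsOpen C)
    (hCsub : C ⊆ U \ {x}) (hCclosed : closure C ∩ (U \ {x}) ⊆ C) (hCne : C.Nonempty) :
    x ∈ closure C := by
  by_contra hx
  have hcl : (Subtype.val ⁻¹' (closure C) : Set U) = Subtype.val ⁻¹' C := by
    apply Subset.antisymm
    · rintro ⟨z, hzU⟩ hz
      simp only [mem_preimage] at hz ⊢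
      rcases eq_or_ne z x with rfl | hzx
      · exact absurd hz hx
      · exact hCclosed ⟨hz, hzU, hzx⟩
    · exact fun z hz => subset_closure hz
  have : PreconnectedSpace U := Subtype.preconnectedSpace hU
  have hclopen : IsClopen (Subtype.val ⁻¹' C : Set U) :=
    ⟨hcl ▸ (isClosed_closure.preimage continuous_subtype_val), hCopen.preimage continuous_subtype_val⟩
  rcases isClopen_iff.mp hclopen with h | h
  · rcases hCne with ⟨c, hc⟩
    have : (⟨c, (hCsub hc).1⟩ : U) ∈ (Subtype.val ⁻¹' C : Set U) := hc
    rw [h] at this; exact this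
  · have : (⟨x, hxU⟩ : U) ∈ (Subtype.val ⁻¹' C : Set U) := h ▸ mem_univ _
    exact (hCsub this).2 rfl

/-- the subset of `X` corresponding to a connected component of a subset -/
def compSet {S : Set X} (c : ConnectedComponents ↥S) : Set X :=
  Subtype.val '' (ConnectedComponents.mk ⁻¹' {c})

lemma compSet_nonempty {S : Set X} (c : ConnectedComponents ↥S) : (compSet c).Nonempty := by
  rcases ConnectedComponents.surjective_coe c with ⟨z, rfl⟩
  exact ⟨z.1, z, rfl, rfl⟩

lemma mem_compSet {S : Set X} {c : ConnectedComponents ↥S} {z : X} (hz : z ∈ S) :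
    z ∈ compSet c ↔ ConnectedComponents.mk ⟨z, hz⟩ = c := by
  constructor
  · rintro ⟨w, hw, rfl⟩
    simpa using hw
  · intro h; exact ⟨⟨z, hz⟩, h, rfl⟩

lemma compSet_subset {S : Set X} (c : ConnectedComponents ↥S) : compSet c ⊆ S := by
  rintro z ⟨w, _, rfl⟩; exact w.2

lemma compSet_closure {S : Set X} (c : ConnectedComponents ↥S) :
    closure (compSet c) ∩ S ⊆ compSet c := by
  rintro z ⟨hz, hzS⟩
  rcases ConnectedComponents.surjective_coe c with ⟨w, rfl⟩
  have hfib : (ConnectedComponents.mk ⁻¹' {(ConnectedComponents.mk w : ConnectedComponents ↥S)} : Set ↥S)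
      = connectedComponent w := connectedComponents_preimage_singleton
  have hcllift : (⟨z, hzS⟩ : ↥S) ∈ closure (ConnectedComponents.mk ⁻¹' {(ConnectedComponents.mk w : ConnectedComponents ↥S)}) := by
    rw [hfib]
    have h1 : closure (compSet (ConnectedComponents.mk w)) ⊆ closure (Subtype.val '' (connectedComponent w)) := by
      apply closure_mono; rw [compSet, hfib]
    have h2 := h1 hz
    -- z ∈ closure (val '' connectedComponent w), z ∈ S ⇒ subtype point in closure
    have := (closure_subtype (x := (⟨z, hzS⟩ : ↥S)) (s := connectedComponent w)).mpr h2
    exact this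
  rw [hfib] at hcllift
  have hmem : (⟨z, hzS⟩ : ↥S) ∈ connectedComponent w :=
    isClosed_connectedComponent.closure_subset hcllift
  exact ⟨⟨z, hzS⟩, by rw [hfib]; exact hmem, rfl⟩

lemma compSet_isOpen [LocallyConnectedSpace X] {S : Set X} (hS : IsOpen S)
    (c : ConnectedComponents ↥S) : IsOpen (compSet c) := by
  have : LocallyConnectedSpace ↥S := hS.locallyConnectedSpace
  rcases ConnectedComponents.surjective_coe c with ⟨w, rfl⟩
  have hfib : (ConnectedComponents.mk ⁻¹' {(ConnectedComponents.mk w : ConnectedComponents ↥S)} : Set ↥S)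
      = connectedComponent w := connectedComponents_preimage_singleton
  rw [compSet, hfib]
  exact hS.isOpenMap_subtype_val _ isOpen_connectedComponent
end General


section Stage2
variable {X : Type*} [TopologicalSpace X]

lemma inclComponentsMap_mk {S T : Set X} (h : S ⊆ T) (z : ↥S) :
    inclComponentsMap h (ConnectedComponents.mk z) =
      ConnectedComponents.mk (Set.inclusion h z) :=
  Continuous.connectedComponentsLift_apply_coe _ z

lemma inclComponentsMap_comp {S T R : Set X} (h1 : S ⊆ T) (h2 : T ⊆ R)
    (c : ConnectedComponents ↥S) :
    inclComponentsMap h2 (inclComponentsMap h1 c) = inclComponentsMap (h1.trans h2) c := by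
  rcases ConnectedComponents.surjective_coe c with ⟨z, rfl⟩
  rw [show (↑z : ConnectedComponents ↥S) = ConnectedComponents.mk z from rfl,
    inclComponentsMap_mk, inclComponentsMap_mk, inclComponentsMap_mk]

lemma mk_eq_mk_of_preconnected {S T : Set X} (hT : IsPreconnected T) (hTS : T ⊆ S)
    {z w : X} (hz : z ∈ T) (hw : w ∈ T) (hzS : z ∈ S) (hwS : w ∈ S) :
    (ConnectedComponents.mk ⟨z, hzS⟩ : ConnectedComponents ↥S) =
      ConnectedComponents.mk ⟨w, hwS⟩ := by
  have hpre : IsPreconnected (Subtype.val ⁻¹' T : Set ↥S) := by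
    have himg : Subtype.val '' (Subtype.val ⁻¹' T : Set ↥S) = T := by
      rw [Subtype.image_preimage_coe]; exact Set.inter_eq_self_of_subset_right hTS
    have : Topology.IsInducing (Subtype.val : ↥S → X) := Topology.IsInducing.subtypeVal
    rw [← this.isPreconnected_image, himg]; exact hT
  have hsub : (Subtype.val ⁻¹' T : Set ↥S) ⊆ connectedComponent ⟨z, hzS⟩ :=
    hpre.subset_connectedComponent hz
  have : (⟨w, hwS⟩ : ↥S) ∈ connectedComponent ⟨z, hzS⟩ := hsub hw
  exact ConnectedComponents.coe_eq_coe.mpr (connectedComponent_eq this)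

lemma surj_main [LocallyConnectedSpace X] [T1Space X] {W U : Set X} {x : X}
    (hW : W ∈ 𝓝 x) (hUopen : IsOpen U) (hUconn : IsPreconnected U) (hxU : x ∈ U)
    {A T : Set X} (hA : A = W \ {x}) (hT : T = U \ {x}) (hsub : A ⊆ T) :
    Function.Surjective (inclComponentsMap hsub) := by
  subst hA hT
  intro c
  have hTopen : IsOpen (U \ {x}) := hUopen.sdiff isClosed_singleton
  have hclos : x ∈ closure (compSet c) := by
    refine mem_closure_of_piece hUconn hxU (compSet_isOpen hTopen c) (compSet_subset c)
      (compSet_closure c) (compSet_nonempty c)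
  rcases (mem_closure_iff_nhds.mp hclos W hW) with ⟨z, hzW, hzC⟩
  have hzT : z ∈ U \ {x} := compSet_subset c hzC
  have hzA : z ∈ W \ {x} := ⟨hzW, hzT.2⟩
  refine ⟨ConnectedComponents.mk ⟨z, hzA⟩, ?_⟩
  rw [inclComponentsMap_mk]
  exact (mem_compSet hzT).mp hzC

lemma finite_components_of_spokes [LocallyConnectedSpace X] [T1Space X]
    {U : Set X} {x : X} (hUopen : IsOpen U) (hUconn : IsPreconnected U) (hxU : x ∈ U)
    {ι : Type} [Finite ι] {W : Set X} (hW : W ∈ 𝓝 x) (hWU : W ⊆ U)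
    {T : ι → Set X} (hTpre : ∀ i, IsPreconnected (T i)) (hcov : W \ {x} = ⋃ i, T i) :
    Finite (ConnectedComponents ↥(U \ {x})) := by
  cases isEmpty_or_nonempty (ConnectedComponents ↥(U \ {x})) with
  | inl h => infer_instance
  | inr h =>
    have hTsub : ∀ i, T i ⊆ U \ {x} := by
      intro i
      refine subset_trans ?_ (Set.diff_subset_diff_left hWU)
      rw [hcov]; exact Set.subset_iUnion T i
    classical
    set f : ι → ConnectedComponents ↥(U \ {x}) := fun i =>
      if hi : (T i).Nonempty then ConnectedComponents.mk ⟨hi.choose, hTsub i hi.choose_spec⟩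
      else Classical.arbitrary _ with hf
    refine Finite.of_surjective f ?_
    intro c
    have hclos : x ∈ closure (compSet c) := by
      refine mem_closure_of_piece hUconn hxU ?_ (compSet_subset c)
        (compSet_closure c) (compSet_nonempty c)
      exact compSet_isOpen (hUopen.sdiff isClosed_singleton) c
    rcases (mem_closure_iff_nhds.mp hclos W hW) with ⟨z, hzW, hzC⟩
    have hzT : z ∈ U \ {x} := compSet_subset c hzC
    have hzWx : z ∈ W \ {x} := ⟨hzW, hzT.2⟩
    rw [hcov] at hzWx
    rcases Set.mem_iUnion.mp hzWx with ⟨i, hzi⟩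
    refine ⟨i, ?_⟩
    have hi : (T i).Nonempty := ⟨z, hzi⟩
    rw [hf]; simp only [hi, dif_pos]
    have := mk_eq_mk_of_preconnected (hTpre i) (hTsub i) hi.choose_spec hzi
      (hTsub i hi.choose_spec) hzT
    rw [this]
    exact (mem_compSet hzT).mp hzC

end Stage2


section Stage3
variable {X : Type*} [TopologicalSpace X]

/-- Every point has arbitrarily small open connected "star" neighbourhoods whose
puncture is covered by finitely many preconnected "spokes". -/
def StarBasis (X : Type*) [TopologicalSpace X] : Prop :=
  ∀ (x : X), ∀ S ∈ 𝓝 x, ∃ (W : Set X) (ι : Type) (_ : Finite ι) (T : ι → Set X),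
    W ⊆ S ∧ IsOpen W ∧ x ∈ W ∧ IsConnected W ∧ (∀ i, IsPreconnected (T i)) ∧
    W \ {x} = ⋃ i, T i

lemma StarBasis.locallyConnectedSpace (h : StarBasis X) : LocallyConnectedSpace X := by
  rw [locallyConnectedSpace_iff_subsets_isOpen_isConnected]
  intro x U hU
  obtain ⟨W, ι, _, T, hWS, hWo, hxW, hWc, -, -⟩ := h x U hU
  exact ⟨W, hWS, hWo, hxW, hWc⟩

lemma degreeAt_unique [LocallyConnectedSpace X] {x : X} {m n : ℕ}
    (hm : DegreeAt x m) (hn : DegreeAt x n) : m = n := by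
  obtain ⟨U₀, hU₀, Hm⟩ := hm
  obtain ⟨U₁, hU₁, Hn⟩ := hn
  obtain ⟨V, hVsub, hVo, hxV, hVc⟩ :=
    locallyConnectedSpace_iff_subsets_isOpen_isConnected.mp ‹_› x (U₀ ∩ U₁)
      (Filter.inter_mem hU₀ hU₁)
  rw [← Hm V (hVsub.trans inter_subset_left) hVo hxV hVc,
      Hn V (hVsub.trans inter_subset_right) hVo hxV hVc]

lemma degreeAt_card [LocallyConnectedSpace X] [T1Space X] {x : X} (B : BranchNbhd x) :
    DegreeAt x (Nat.card (Divisor B)) := by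
  refine ⟨B.carrier, B.isOpen'.mem_nhds B.mem', ?_⟩
  intro U hUB hUo hxU hUc
  obtain ⟨W, hWB, hWU, hWo, hxW, hWc, hbij⟩ := B.stable' U (hUo.mem_nhds hxU)
  have h1 : (W \ {x} : Set X) ⊆ U \ {x} := Set.diff_subset_diff_left hWU
  have h2 : (U \ {x} : Set X) ⊆ B.carrier \ {x} := Set.diff_subset_diff_left hUB
  have hinj : Function.Injective (inclComponentsMap h1) := by
    intro a b hab
    apply hbij.1
    show inclComponentsMap (Set.diff_subset_diff_left hWB) a
      = inclComponentsMap (Set.diff_subset_diff_left hWB) b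
    calc inclComponentsMap (Set.diff_subset_diff_left hWB) a
        = inclComponentsMap h2 (inclComponentsMap h1 a) := (inclComponentsMap_comp h1 h2 a).symm
      _ = inclComponentsMap h2 (inclComponentsMap h1 b) := by rw [hab]
      _ = inclComponentsMap (Set.diff_subset_diff_left hWB) b := inclComponentsMap_comp h1 h2 b
  have hsurj : Function.Surjective (inclComponentsMap h1) :=
    surj_main (hWo.mem_nhds hxW) hUo hUc.isPreconnected hxU rfl rfl h1
  have hcard : Nat.card (ConnectedComponents ↥(W \ {x}))
      = Nat.card (ConnectedComponents ↥(U \ {x})) :=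
    Nat.card_eq_of_bijective _ ⟨hinj, hsurj⟩
  have hcard2 : Nat.card (ConnectedComponents ↥(W \ {x})) = Nat.card (Divisor B) :=
    Nat.card_eq_of_bijective _ hbij
  show Nat.card (ConnectedComponents ↥(U \ {x})) = Nat.card (Divisor B)
  rw [← hcard, hcard2]

lemma degree_eq_card [LocallyConnectedSpace X] [T1Space X] {x : X} (B : BranchNbhd x) :
    degree x = Nat.card (Divisor B) := by
  have hex : ∃ n, DegreeAt x n := ⟨_, degreeAt_card B⟩
  have h1 : degree x = hex.choose := dif_pos hex
  rw [h1]
  exact degreeAt_unique hex.choose_spec (degreeAt_card B)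

lemma finite_divisor [LocallyConnectedSpace X] [T1Space X] (hstar : StarBasis X) {x : X}
    (B : BranchNbhd x) : Finite (Divisor B) := by
  obtain ⟨W₂, hW₂B, -, hW₂o, hxW₂, hW₂c, hbij⟩ := B.stable' univ Filter.univ_mem
  obtain ⟨W₃, ι, hι, T, hW₃sub, hW₃o, hxW₃, hW₃c, hTpre, hcov⟩ :=
    hstar x W₂ (hW₂o.mem_nhds hxW₂)
  haveI : Finite ι := hι
  have : Finite (ConnectedComponents ↥(W₂ \ {x})) :=
    finite_components_of_spokes hW₂o hW₂c.isPreconnected hxW₂ (hW₃o.mem_nhds hxW₃)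
      hW₃sub hTpre hcov
  exact Finite.of_surjective _ hbij.2


section Realization
open Relation

variable {V E : Type} {ends : E → V × V}

/-- the equivalence class of the vertex `v` under the gluing relation -/
def vertexClass (ends : E → V × V) (v : V) : Set (V ⊕ E × unitInterval) :=
  {z | z = Sum.inl v ∨ (∃ e : E, (ends e).1 = v ∧ z = Sum.inr (e, 0)) ∨
       (∃ e : E, (ends e).2 = v ∧ z = Sum.inr (e, 1))}

lemma zero_ne_one_I : (0 : unitInterval) ≠ 1 := by
  intro h
  have := congrArg (Subtype.val) h
  simpa using this

lemma vertexClass_unique {v w : V} {z : V ⊕ E × unitInterval}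
    (hzv : z ∈ vertexClass ends v) (hzw : z ∈ vertexClass ends w) : v = w := by
  rcases hzv with rfl | ⟨e, he, rfl⟩ | ⟨e, he, rfl⟩
  · rcases hzw with h' | ⟨e', he', h'⟩ | ⟨e', he', h'⟩
    · exact (Sum.inl.injEq _ _ ▸ h' : v = w)
    · simp at h'
    · simp at h'
  · rcases hzw with h' | ⟨e', he', h'⟩ | ⟨e', he', h'⟩
    · simp at h'
    · injection h' with h2
      have he2 : e = e' := congrArg Prod.fst h2
      rw [← he, ← he', ← he2]
    · injection h' with h2
      exact absurd (congrArg Prod.snd h2) zero_ne_one_I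
  · rcases hzw with h' | ⟨e', he', h'⟩ | ⟨e', he', h'⟩
    · simp at h'
    · injection h' with h2
      exact absurd (congrArg Prod.snd h2).symm zero_ne_one_I
    · injection h' with h2
      have he2 : e = e' := congrArg Prod.fst h2
      rw [← he, ← he', ← he2]

lemma mem_vertexClass_self (v : V) : (Sum.inl v : V ⊕ E × unitInterval) ∈ vertexClass ends v :=
  Or.inl rfl

lemma eqvGen_characterization {a b : V ⊕ E × unitInterval}
    (h : EqvGen (GraphGlueRel V E ends) a b) :
    a = b ∨ ∃ v, a ∈ vertexClass ends v ∧ b ∈ vertexClass ends v := by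
  induction h with
  | rel a b hab =>
    rcases hab with ⟨e, ha, hb⟩ | ⟨e, ha, hb⟩
    · exact Or.inr ⟨(ends e).1, ha ▸ mem_vertexClass_self _, hb ▸ Or.inr (Or.inl ⟨e, rfl, rfl⟩)⟩
    · exact Or.inr ⟨(ends e).2, ha ▸ mem_vertexClass_self _, hb ▸ Or.inr (Or.inr ⟨e, rfl, rfl⟩)⟩
  | refl a => exact Or.inl rfl
  | symm a b _ ih =>
    rcases ih with rfl | ⟨v, h1, h2⟩
    · exact Or.inl rfl
    · exact Or.inr ⟨v, h2, h1⟩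
  | trans a b c _ _ ih1 ih2 =>
    rcases ih1 with rfl | ⟨v, h1, h2⟩
    · exact ih2
    · rcases ih2 with rfl | ⟨w, h3, h4⟩
      · exact Or.inr ⟨v, h1, h2⟩
      · exact Or.inr ⟨v, h1, (vertexClass_unique h3 h2 : w = v) ▸ h4⟩

lemma eqvGen_of_vertexClass {v : V} {z : V ⊕ E × unitInterval} (hz : z ∈ vertexClass ends v) :
    EqvGen (GraphGlueRel V E ends) (Sum.inl v) z := by
  rcases hz with rfl | ⟨e, he, rfl⟩ | ⟨e, he, rfl⟩
  · exact EqvGen.refl _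
  · exact EqvGen.rel _ _ (Or.inl ⟨e, by rw [he], rfl⟩)
  · exact EqvGen.rel _ _ (Or.inr ⟨e, by rw [he], rfl⟩)

lemma quot_mk_eq_iff {a b : V ⊕ E × unitInterval} :
    Quot.mk (GraphGlueRel V E ends) a = Quot.mk (GraphGlueRel V E ends) b ↔
      (a = b ∨ ∃ v, a ∈ vertexClass ends v ∧ b ∈ vertexClass ends v) := by
  constructor
  · intro h
    exact eqvGen_characterization (Quot.eqvGen_exact h)
  · rintro (rfl | ⟨v, h1, h2⟩)
    · rfl
    · exact (Quot.eqvGen_sound (eqvGen_of_vertexClass h1)).symm.trans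
        (Quot.eqvGen_sound (eqvGen_of_vertexClass h2))


/-- the quotient map onto the graph realization -/
def mkR (ends : E → V × V) (z : V ⊕ E × unitInterval) : GraphRealization V E ends :=
  Quot.mk _ z

/-- the parametrization of the edge `e` inside the realization -/
noncomputable def spokeFun (ends : E → V × V) (e : E) (t : ℝ) : GraphRealization V E ends :=
  mkR ends (Sum.inr (e, Set.projIcc 0 1 zero_le_one t))

lemma continuous_spokeFun (e : E) : Continuous (spokeFun ends e) := by
  letI : TopologicalSpace V := ⊥
  letI : TopologicalSpace E := ⊥
  haveI : DiscreteTopology E := ⟨rfl⟩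
  have hq : Continuous (mkR (V := V) (E := E) ends) := continuous_quot_mk
  exact hq.comp (continuous_inr.comp
    (Continuous.prodMk continuous_const continuous_projIcc))

lemma spokeFun_coe (e : E) (s : unitInterval) :
    spokeFun ends e (s : ℝ) = mkR ends (Sum.inr (e, s)) := by
  rw [spokeFun, Set.projIcc_of_mem zero_le_one s.2]

lemma spokeFun_zero {v : V} (e : E) (hv : (ends e).1 = v) :
    spokeFun ends e 0 = mkR ends (Sum.inl v) := by
  have h1 : spokeFun ends e 0 = mkR ends (Sum.inr (e, 0)) := by
    rw [spokeFun, Set.projIcc_left]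
    rfl
  have h2 : GraphGlueRel V E ends (Sum.inl v) (Sum.inr (e, 0)) := Or.inl ⟨e, by rw [hv], rfl⟩
  rw [h1, mkR, mkR]
  exact (Quot.sound h2).symm

lemma spokeFun_one {v : V} (e : E) (hv : (ends e).2 = v) :
    spokeFun ends e 1 = mkR ends (Sum.inl v) := by
  have h1 : spokeFun ends e 1 = mkR ends (Sum.inr (e, 1)) := by
    rw [spokeFun, Set.projIcc_right]
    rfl
  have h2 : GraphGlueRel V E ends (Sum.inl v) (Sum.inr (e, 1)) := Or.inr ⟨e, by rw [hv], rfl⟩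
  rw [h1, mkR, mkR]
  exact (Quot.sound h2).symm

lemma mkR_inr_zero {v : V} (e : E) (hv : (ends e).1 = v) :
    mkR ends (Sum.inr (e, 0)) = mkR ends (Sum.inl v) := by
  have h2 : GraphGlueRel V E ends (Sum.inl v) (Sum.inr (e, 0)) := Or.inl ⟨e, by rw [hv], rfl⟩
  exact (Quot.sound h2).symm

lemma mkR_inr_one {v : V} (e : E) (hv : (ends e).2 = v) :
    mkR ends (Sum.inr (e, 1)) = mkR ends (Sum.inl v) := by
  have h2 : GraphGlueRel V E ends (Sum.inl v) (Sum.inr (e, 1)) := Or.inr ⟨e, by rw [hv], rfl⟩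
  exact (Quot.sound h2).symm

open Classical in
lemma star_vertex [Fintype V] [Fintype E] (v : V)
    (S : Set (GraphRealization V E ends)) (hS : S ∈ 𝓝 (mkR ends (Sum.inl v))) :
    ∃ (W : Set (GraphRealization V E ends)) (ι : Type) (_ : Finite ι)
      (T : ι → Set (GraphRealization V E ends)),
      W ⊆ S ∧ IsOpen W ∧ mkR ends (Sum.inl v) ∈ W ∧ IsConnected W ∧
      (∀ i, IsPreconnected (T i)) ∧ W \ {mkR ends (Sum.inl v)} = ⋃ i, T i := by
  letI : TopologicalSpace V := ⊥
  letI : TopologicalSpace E := ⊥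
  haveI : DiscreteTopology V := ⟨rfl⟩
  haveI : DiscreteTopology E := ⟨rfl⟩
  have hQM : IsQuotientMap (mkR (V := V) (E := E) ends) := isQuotientMap_quot_mk
  set x := mkR ends (Sum.inl v) with hxdef
  -- choose per-edge epsilons
  have h0 : ∀ e : E, ∃ δ, 0 < δ ∧ ((ends e).1 = v → ∀ s : ℝ, |s| < δ → spokeFun ends e s ∈ S) := by
    intro e
    by_cases hv : (ends e).1 = v
    · have hx0 : spokeFun ends e 0 = x := spokeFun_zero e hv
      have hmem : (spokeFun ends e) ⁻¹' S ∈ 𝓝 (0 : ℝ) :=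
        (continuous_spokeFun e).continuousAt.preimage_mem_nhds (by rw [hx0]; exact hS)
      rcases Metric.mem_nhds_iff.mp hmem with ⟨δ, hδ, hball⟩
      refine ⟨δ, hδ, fun _ s hs => hball ?_⟩
      simpa [Real.dist_eq] using hs
    · exact ⟨1, one_pos, fun h => absurd h hv⟩
  have h1 : ∀ e : E, ∃ δ, 0 < δ ∧ ((ends e).2 = v → ∀ s : ℝ, |s - 1| < δ → spokeFun ends e s ∈ S) := by
    intro e
    by_cases hv : (ends e).2 = v
    · have hx1 : spokeFun ends e 1 = x := spokeFun_one e hv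
      have hmem : (spokeFun ends e) ⁻¹' S ∈ 𝓝 (1 : ℝ) :=
        (continuous_spokeFun e).continuousAt.preimage_mem_nhds (by rw [hx1]; exact hS)
      rcases Metric.mem_nhds_iff.mp hmem with ⟨δ, hδ, hball⟩
      refine ⟨δ, hδ, fun _ s hs => hball ?_⟩
      simpa [Real.dist_eq] using hs
    · exact ⟨1, one_pos, fun h => absurd h hv⟩
  choose δ0 hδ0 H0 using h0
  choose δ1 hδ1 H1 using h1
  obtain ⟨ε, hεpos, hεhalf, hεle⟩ :
      ∃ ε, 0 < ε ∧ ε ≤ 1/2 ∧ ∀ e, ε ≤ δ0 e ∧ ε ≤ δ1 e := by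
    rcases isEmpty_or_nonempty E with hE | hE
    · exact ⟨1/2, by norm_num, le_refl _, fun e => hE.elim e⟩
    · have hne : (Finset.univ : Finset E).Nonempty := Finset.univ_nonempty
      set m := Finset.univ.inf' hne (fun e => min (δ0 e) (δ1 e)) with hm
      refine ⟨min m (1/2), lt_min ?_ (by norm_num), min_le_right _ _, fun e => ⟨?_, ?_⟩⟩
      · exact (Finset.lt_inf'_iff hne).mpr fun b _ => lt_min (hδ0 b) (hδ1 b)
      · exact (min_le_left _ _).trans ((Finset.inf'_le _ (Finset.mem_univ e)).trans (min_le_left _ _))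
      · exact (min_le_left _ _).trans ((Finset.inf'_le _ (Finset.mem_univ e)).trans (min_le_right _ _))
  have hε1 : ε ≤ 1 := hεhalf.trans (by norm_num)
  -- the saturated open star in the disjoint union
  set N : Set (V ⊕ E × unitInterval) :=
    {z | z = Sum.inl v ∨ ∃ e s, z = Sum.inr (e, s) ∧
      (((ends e).1 = v ∧ (s : ℝ) < ε) ∨ ((ends e).2 = v ∧ 1 - ε < (s : ℝ)))} with hN
  have hCN : vertexClass ends v ⊆ N := by
    rintro z (rfl | ⟨e, he, rfl⟩ | ⟨e, he, rfl⟩)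
    · exact Or.inl rfl
    · exact Or.inr ⟨e, 0, rfl, Or.inl ⟨he, by simpa using hεpos⟩⟩
    · exact Or.inr ⟨e, 1, rfl, Or.inr ⟨he, by simp [hεpos]⟩⟩
  -- membership in a vertex class forces the coordinate to be 0 or 1
  have hNclass : ∀ z ∈ N, ∀ u : V, z ∈ vertexClass ends u → u = v := by
    rintro z (rfl | ⟨e, s, rfl, hcond⟩) u hu
    · exact (vertexClass_unique hu (mem_vertexClass_self v)).symm ▸ rfl
    · rcases hu with h' | ⟨e', he', h'⟩ | ⟨e', he', h'⟩
      · simp at h'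
      · injection h' with h2
        have hee : e = e' := congrArg Prod.fst h2
        have hs0 : s = 0 := congrArg Prod.snd h2
        rcases hcond with ⟨hv, -⟩ | ⟨-, hlt⟩
        · rw [← he', ← hee, hv]
        · rw [hs0] at hlt
          norm_num at hlt
          exact absurd (hlt.trans_le hεhalf) (by norm_num)
      · injection h' with h2
        have hee : e = e' := congrArg Prod.fst h2
        have hs1 : s = 1 := congrArg Prod.snd h2
        rcases hcond with ⟨-, hlt⟩ | ⟨hv, -⟩
        · rw [hs1] at hlt
          simp at hlt
          exact absurd (hlt.trans_le hεhalf) (by norm_num)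
        · rw [← he', ← hee, hv]
  have hNsat : mkR ends ⁻¹' (mkR ends '' N) = N := by
    apply Set.Subset.antisymm
    · rintro z ⟨w, hwN, hww⟩
      rcases quot_mk_eq_iff.mp hww.symm with rfl | ⟨u, hzu, hwu⟩
      · exact hwN
      · have : u = v := hNclass w hwN u hwu
        exact hCN (this ▸ hzu)
    · exact Set.subset_preimage_image _ _
  have hNopen : IsOpen N := by
    rw [hN, isOpen_sum_iff]
    constructor
    · have : Sum.inl ⁻¹' {z : V ⊕ E × unitInterval | z = Sum.inl v ∨ ∃ e s, z = Sum.inr (e, s) ∧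
        (((ends e).1 = v ∧ (s : ℝ) < ε) ∨ ((ends e).2 = v ∧ 1 - ε < (s : ℝ)))} = {v} := by
        ext u; simp [Sum.inl.injEq]
      rw [this]
      exact isOpen_discrete _
    · have : Sum.inr ⁻¹' {z : V ⊕ E × unitInterval | z = Sum.inl v ∨ ∃ e s, z = Sum.inr (e, s) ∧
        (((ends e).1 = v ∧ (s : ℝ) < ε) ∨ ((ends e).2 = v ∧ 1 - ε < (s : ℝ)))}
          = ({p : E × unitInterval | (ends p.1).1 = v} ∩ (fun p : E × unitInterval => (p.2 : ℝ)) ⁻¹' Iio ε)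
            ∪ ({p : E × unitInterval | (ends p.1).2 = v} ∩ (fun p : E × unitInterval => (p.2 : ℝ)) ⁻¹' Ioi (1 - ε)) := by
        ext ⟨e, s⟩
        simp only [Set.mem_preimage, Set.mem_setOf_eq, Set.mem_union, Set.mem_inter_iff,
          Set.mem_Iio, Set.mem_Ioi, Sum.inr.injEq, Prod.mk.injEq]
        constructor
        · rintro (h | ⟨e', s', ⟨rfl, rfl⟩, h⟩)
          · simp at h
          · exact h
        · intro h
          exact Or.inr ⟨e, s, ⟨rfl, rfl⟩, h⟩
      rw [this]
      have hc2 : Continuous (fun p : E × unitInterval => (p.2 : ℝ)) :=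
        continuous_subtype_val.comp continuous_snd
      refine IsOpen.union (IsOpen.inter ?_ (isOpen_Iio.preimage hc2))
        (IsOpen.inter ?_ (isOpen_Ioi.preimage hc2))
      · exact IsOpen.preimage continuous_fst (isOpen_discrete {e : E | (ends e).1 = v})
      · exact IsOpen.preimage continuous_fst (isOpen_discrete {e : E | (ends e).2 = v})
  set W := mkR ends '' N with hW
  have hWopen : IsOpen W := hQM.isOpen_preimage.mp (hNsat ▸ hNopen)
  have hxW : x ∈ W := ⟨Sum.inl v, Or.inl rfl, rfl⟩
  -- points of the star with nonzero interior coordinate are not x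
  have hne_x : ∀ (e : E) (s : unitInterval), (0 : ℝ) < s → (s : ℝ) < 1 →
      mkR ends (Sum.inr (e, s)) ≠ x := by
    intro e s hs0 hs1 hcontra
    rcases quot_mk_eq_iff.mp (hcontra : _ = mkR ends (Sum.inl v)) with h | ⟨u, hu, -⟩
    · simp at h
    · rcases hu with h' | ⟨e', -, h'⟩ | ⟨e', -, h'⟩
      · simp at h'
      · injection h' with h2
        have : s = 0 := congrArg Prod.snd h2
        rw [this] at hs0; simp at hs0
      · injection h' with h2
        have : s = 1 := congrArg Prod.snd h2
        rw [this] at hs1; simp at hs1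
  have hWS : W ⊆ S := by
    rintro _ ⟨z, hzN, rfl⟩
    rcases hzN with rfl | ⟨e, s, rfl, hcond⟩
    · exact mem_of_mem_nhds hS
    · rcases hcond with ⟨hv, hlt⟩ | ⟨hv, hlt⟩
      · rw [← spokeFun_coe]
        refine H0 e hv (s : ℝ) ?_
        rw [abs_of_nonneg s.2.1]
        exact hlt.trans_le (hεle e).1
      · rw [← spokeFun_coe]
        refine H1 e hv (s : ℝ) ?_
        rw [abs_of_nonpos (by linarith [s.2.2] : (s : ℝ) - 1 ≤ 0)]
        have : (1 : ℝ) - s < ε := by linarith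
        linarith [(hεle e).2]
  -- connectedness via pieces through x
  set P : Option (E × Bool) → Set (GraphRealization V E ends) := fun o =>
    match o with
    | none => {x}
    | some (e, false) => if (ends e).1 = v then spokeFun ends e '' Ico 0 ε else {x}
    | some (e, true) => if (ends e).2 = v then spokeFun ends e '' Ioc (1 - ε) 1 else {x}
    with hP
  have hPx : ∀ o, x ∈ P o := by
    rintro (_ | ⟨e, b⟩)
    · exact rfl
    · cases b
      · by_cases hv : (ends e).1 = v
        · simp only [hP, if_pos hv]
          exact ⟨0, ⟨le_refl _, hεpos⟩, spokeFun_zero e hv⟩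
        · simp only [hP, if_neg hv]; exact rfl
      · by_cases hv : (ends e).2 = v
        · simp only [hP, if_pos hv]
          exact ⟨1, ⟨by linarith, le_refl _⟩, spokeFun_one e hv⟩
        · simp only [hP, if_neg hv]; exact rfl
  have hPpre : ∀ o, IsPreconnected (P o) := by
    rintro (_ | ⟨e, b⟩)
    · exact isPreconnected_singleton
    · cases b
      · by_cases hv : (ends e).1 = v
        · simp only [hP, if_pos hv]
          exact isPreconnected_Ico.image _ (continuous_spokeFun e).continuousOn
        · simp only [hP, if_neg hv]; exact isPreconnected_singleton
      · by_cases hv : (ends e).2 = v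
        · simp only [hP, if_pos hv]
          exact isPreconnected_Ioc.image _ (continuous_spokeFun e).continuousOn
        · simp only [hP, if_neg hv]; exact isPreconnected_singleton
  have hWeq : W = ⋃ o, P o := by
    apply Set.Subset.antisymm
    · rintro _ ⟨z, hzN, rfl⟩
      rcases hzN with rfl | ⟨e, s, rfl, hcond⟩
      · exact Set.mem_iUnion.mpr ⟨none, rfl⟩
      · rcases hcond with ⟨hv, hlt⟩ | ⟨hv, hlt⟩
        · refine Set.mem_iUnion.mpr ⟨some (e, false), ?_⟩
          simp only [hP, if_pos hv]
          exact ⟨(s : ℝ), ⟨s.2.1, hlt⟩, spokeFun_coe e s⟩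
        · refine Set.mem_iUnion.mpr ⟨some (e, true), ?_⟩
          simp only [hP, if_pos hv]
          exact ⟨(s : ℝ), ⟨hlt, s.2.2⟩, spokeFun_coe e s⟩
    · refine Set.iUnion_subset ?_
      rintro (_ | ⟨e, b⟩)
      · exact Set.singleton_subset_iff.mpr hxW
      · cases b
        · by_cases hv : (ends e).1 = v
          · simp only [hP, if_pos hv]
            rintro _ ⟨u, ⟨hu0, huε⟩, rfl⟩
            have humem : u ∈ unitInterval := ⟨hu0, (huε.trans_le hε1).le⟩
            have : spokeFun ends e u = mkR ends (Sum.inr (e, ⟨u, humem⟩)) := by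
              rw [spokeFun, Set.projIcc_of_mem zero_le_one humem]
            rw [this]
            exact ⟨Sum.inr (e, ⟨u, humem⟩), Or.inr ⟨e, ⟨u, humem⟩, rfl, Or.inl ⟨hv, huε⟩⟩, rfl⟩
          · simp only [hP, if_neg hv]
            exact Set.singleton_subset_iff.mpr hxW
        · by_cases hv : (ends e).2 = v
          · simp only [hP, if_pos hv]
            rintro _ ⟨u, ⟨huε, hu1⟩, rfl⟩
            have humem : u ∈ unitInterval := ⟨by linarith [hεhalf], hu1⟩
            have : spokeFun ends e u = mkR ends (Sum.inr (e, ⟨u, humem⟩)) := by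
              rw [spokeFun, Set.projIcc_of_mem zero_le_one humem]
            rw [this]
            exact ⟨Sum.inr (e, ⟨u, humem⟩), Or.inr ⟨e, ⟨u, humem⟩, rfl, Or.inr ⟨hv, huε⟩⟩, rfl⟩
          · simp only [hP, if_neg hv]
            exact Set.singleton_subset_iff.mpr hxW
  have hWconn : IsConnected W := by
    refine ⟨⟨x, hxW⟩, ?_⟩
    rw [hWeq]
    exact isPreconnected_iUnion ⟨x, Set.mem_iInter.mpr hPx⟩ hPpre
  -- the spokes
  set T : E × Bool → Set (GraphRealization V E ends) := fun p =>
    match p with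
    | (e, false) => if (ends e).1 = v then spokeFun ends e '' Ioo 0 ε else ∅
    | (e, true) => if (ends e).2 = v then spokeFun ends e '' Ioo (1 - ε) 1 else ∅
    with hT
  have hTpre : ∀ p, IsPreconnected (T p) := by
    rintro ⟨e, b⟩
    cases b
    · by_cases hv : (ends e).1 = v
      · simp only [hT, if_pos hv]
        exact isPreconnected_Ioo.image _ (continuous_spokeFun e).continuousOn
      · simp only [hT, if_neg hv]; exact isPreconnected_empty
    · by_cases hv : (ends e).2 = v
      · simp only [hT, if_pos hv]
        exact isPreconnected_Ioo.image _ (continuous_spokeFun e).continuousOn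
      · simp only [hT, if_neg hv]; exact isPreconnected_empty
  have hcov : W \ {x} = ⋃ p, T p := by
    apply Set.Subset.antisymm
    · rintro w ⟨⟨z, hzN, rfl⟩, hwx⟩
      rcases hzN with rfl | ⟨e, s, rfl, hcond⟩
      · exact absurd rfl hwx
      · rcases hcond with ⟨hv, hlt⟩ | ⟨hv, hlt⟩
        · have hs0 : (0 : ℝ) < s := by
            rcases lt_or_eq_of_le s.2.1 with h | h
            · exact h
            · exfalso
              apply hwx
              have hs : s = 0 := by ext; exact h.symm
              rw [hs, hxdef]
              exact Set.mem_singleton_iff.mpr (mkR_inr_zero e hv)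
          refine Set.mem_iUnion.mpr ⟨(e, false), ?_⟩
          simp only [hT, if_pos hv]
          exact ⟨(s : ℝ), ⟨hs0, hlt⟩, spokeFun_coe e s⟩
        · have hs1 : (s : ℝ) < 1 := by
            rcases lt_or_eq_of_le s.2.2 with h | h
            · exact h
            · exfalso
              apply hwx
              have hs : s = 1 := by ext; exact h
              rw [hs, hxdef]
              exact Set.mem_singleton_iff.mpr (mkR_inr_one e hv)
          refine Set.mem_iUnion.mpr ⟨(e, true), ?_⟩
          simp only [hT, if_pos hv]
          exact ⟨(s : ℝ), ⟨hlt, hs1⟩, spokeFun_coe e s⟩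
    · refine Set.iUnion_subset ?_
      rintro ⟨e, b⟩
      cases b
      · by_cases hv : (ends e).1 = v
        · simp only [hT, if_pos hv]
          rintro _ ⟨u, ⟨hu0, huε⟩, rfl⟩
          have humem : u ∈ unitInterval := ⟨hu0.le, (huε.trans_le hε1).le⟩
          have heq : spokeFun ends e u = mkR ends (Sum.inr (e, ⟨u, humem⟩)) := by
            rw [spokeFun, Set.projIcc_of_mem zero_le_one humem]
          constructor
          · rw [heq]
            exact ⟨Sum.inr (e, ⟨u, humem⟩), Or.inr ⟨e, ⟨u, humem⟩, rfl, Or.inl ⟨hv, huε⟩⟩, rfl⟩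
          · rw [heq]
            exact hne_x e ⟨u, humem⟩ hu0 (by simpa using huε.trans_le hεhalf |>.trans_le (by norm_num))
        · simp only [hT, if_neg hv]; exact Set.empty_subset _
      · by_cases hv : (ends e).2 = v
        · simp only [hT, if_pos hv]
          rintro _ ⟨u, ⟨huε, hu1⟩, rfl⟩
          have humem : u ∈ unitInterval := ⟨by linarith [hεhalf], hu1.le⟩
          have heq : spokeFun ends e u = mkR ends (Sum.inr (e, ⟨u, humem⟩)) := by
            rw [spokeFun, Set.projIcc_of_mem zero_le_one humem]
          constructor
          · rw [heq]
            exact ⟨Sum.inr (e, ⟨u, humem⟩), Or.inr ⟨e, ⟨u, humem⟩, rfl, Or.inr ⟨hv, huε⟩⟩, rfl⟩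
          · rw [heq]
            refine hne_x e ⟨u, humem⟩ (by simp; linarith [hεhalf]) (by simpa using hu1)
        · simp only [hT, if_neg hv]; exact Set.empty_subset _
  exact ⟨W, E × Bool, inferInstance, T, hWS, hWopen, hxW, hWconn, hTpre, hcov⟩


lemma interior_class {e : E} {s : unitInterval} (hs0 : 0 < (s : ℝ)) (hs1 : (s : ℝ) < 1)
    {w : V ⊕ E × unitInterval} (h : mkR ends (Sum.inr (e, s)) = mkR ends w) :
    w = Sum.inr (e, s) := by
  rcases quot_mk_eq_iff.mp h with h' | ⟨u, hu, -⟩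
  · exact h'.symm
  · exfalso
    rcases hu with h' | ⟨e', -, h'⟩ | ⟨e', -, h'⟩
    · simp at h'
    · injection h' with h2
      have : s = 0 := congrArg Prod.snd h2
      rw [this] at hs0; simp at hs0
    · injection h' with h2
      have : s = 1 := congrArg Prod.snd h2
      rw [this] at hs1; simp at hs1

lemma star_interior [Fintype V] [Fintype E] (e : E) (t : unitInterval)
    (ht0 : t ≠ 0) (ht1 : t ≠ 1)
    (S : Set (GraphRealization V E ends)) (hS : S ∈ 𝓝 (mkR ends (Sum.inr (e, t)))) :
    ∃ (W : Set (GraphRealization V E ends)) (ι : Type) (_ : Finite ι)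
      (T : ι → Set (GraphRealization V E ends)),
      W ⊆ S ∧ IsOpen W ∧ mkR ends (Sum.inr (e, t)) ∈ W ∧ IsConnected W ∧
      (∀ i, IsPreconnected (T i)) ∧ W \ {mkR ends (Sum.inr (e, t))} = ⋃ i, T i := by
  letI : TopologicalSpace V := ⊥
  letI : TopologicalSpace E := ⊥
  haveI : DiscreteTopology V := ⟨rfl⟩
  haveI : DiscreteTopology E := ⟨rfl⟩
  have hQM : IsQuotientMap (mkR (V := V) (E := E) ends) := isQuotientMap_quot_mk
  set x := mkR ends (Sum.inr (e, t)) with hxdef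
  set τ : ℝ := (t : ℝ) with hτ
  have hτ0 : 0 < τ := lt_of_le_of_ne t.2.1 (fun h => ht0 (Subtype.ext h.symm))
  have hτ1 : τ < 1 := lt_of_le_of_ne t.2.2 (fun h => ht1 (Subtype.ext h))
  have hxspoke : spokeFun ends e τ = x := spokeFun_coe e t
  have hmem : (spokeFun ends e) ⁻¹' S ∈ 𝓝 τ :=
    (continuous_spokeFun e).continuousAt.preimage_mem_nhds (by rw [hxspoke]; exact hS)
  obtain ⟨δ, hδ, hball⟩ := Metric.mem_nhds_iff.mp hmem
  obtain ⟨ε, hεpos, hεδ, hετ, hετ1⟩ :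
      ∃ ε, 0 < ε ∧ ε ≤ δ ∧ ε ≤ τ ∧ ε ≤ 1 - τ :=
    ⟨min δ (min τ (1 - τ)), lt_min hδ (lt_min hτ0 (by linarith)), min_le_left _ _,
      (min_le_right _ _).trans (min_le_left _ _), (min_le_right _ _).trans (min_le_right _ _)⟩
  set N : Set (V ⊕ E × unitInterval) :=
    {z | ∃ s : unitInterval, z = Sum.inr (e, s) ∧ τ - ε < (s : ℝ) ∧ (s : ℝ) < τ + ε} with hN
  have hcoords : ∀ s : unitInterval, τ - ε < (s : ℝ) → (s : ℝ) < τ + ε →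
      0 < (s : ℝ) ∧ (s : ℝ) < 1 := by
    intro s hlo hhi
    constructor
    · linarith
    · linarith
  have hNsat : mkR ends ⁻¹' (mkR ends '' N) = N := by
    apply Set.Subset.antisymm
    · rintro z ⟨w, ⟨s, rfl, hlo, hhi⟩, hww⟩
      obtain ⟨hs0, hs1⟩ := hcoords s hlo hhi
      have := interior_class hs0 hs1 hww
      rw [this]
      exact ⟨s, rfl, hlo, hhi⟩
    · exact Set.subset_preimage_image _ _
  have hNopen : IsOpen N := by
    rw [hN, isOpen_sum_iff]
    constructor
    · have : Sum.inl ⁻¹' {z : V ⊕ E × unitInterval | ∃ s : unitInterval, z = Sum.inr (e, s) ∧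
        τ - ε < (s : ℝ) ∧ (s : ℝ) < τ + ε} = (∅ : Set V) := by
        ext u; simp
      rw [this]
      exact isOpen_empty
    · have : Sum.inr ⁻¹' {z : V ⊕ E × unitInterval | ∃ s : unitInterval, z = Sum.inr (e, s) ∧
        τ - ε < (s : ℝ) ∧ (s : ℝ) < τ + ε}
          = (Prod.fst ⁻¹' {e' : E | e' = e}) ∩
            ((fun p : E × unitInterval => (p.2 : ℝ)) ⁻¹' Ioo (τ - ε) (τ + ε)) := by
        ext ⟨e', s⟩
        simp only [Set.mem_preimage, Set.mem_setOf_eq, Set.mem_inter_iff, Set.mem_Ioo,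
          Sum.inr.injEq, Prod.mk.injEq]
        constructor
        · rintro ⟨s', ⟨rfl, rfl⟩, h⟩
          exact ⟨rfl, h⟩
        · rintro ⟨rfl, h⟩
          exact ⟨s, ⟨rfl, rfl⟩, h⟩
      rw [this]
      have hc2 : Continuous (fun p : E × unitInterval => (p.2 : ℝ)) :=
        continuous_subtype_val.comp continuous_snd
      exact (IsOpen.preimage continuous_fst (isOpen_discrete _)).inter
        (isOpen_Ioo.preimage hc2)
  set W := mkR ends '' N with hW
  have hWopen : IsOpen W := hQM.isOpen_preimage.mp (hNsat ▸ hNopen)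
  have hxW : x ∈ W := ⟨Sum.inr (e, t), ⟨t, rfl, by linarith, by linarith⟩, rfl⟩
  have hWS : W ⊆ S := by
    rintro _ ⟨z, ⟨s, rfl, hlo, hhi⟩, rfl⟩
    rw [← spokeFun_coe]
    apply hball
    rw [Metric.mem_ball, Real.dist_eq, abs_sub_lt_iff]
    constructor <;> [linarith; linarith]
  have hWspoke : W = spokeFun ends e '' Ioo (τ - ε) (τ + ε) := by
    apply Set.Subset.antisymm
    · rintro _ ⟨z, ⟨s, rfl, hlo, hhi⟩, rfl⟩
      exact ⟨(s : ℝ), ⟨hlo, hhi⟩, spokeFun_coe e s⟩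
    · rintro _ ⟨u, ⟨hlo, hhi⟩, rfl⟩
      have humem : u ∈ unitInterval := ⟨by linarith, by linarith⟩
      have heq : spokeFun ends e u = mkR ends (Sum.inr (e, ⟨u, humem⟩)) := by
        rw [spokeFun, Set.projIcc_of_mem zero_le_one humem]
      rw [heq]
      exact ⟨Sum.inr (e, ⟨u, humem⟩), ⟨⟨u, humem⟩, rfl, hlo, hhi⟩, rfl⟩
  have hWconn : IsConnected W := by
    refine ⟨⟨x, hxW⟩, ?_⟩
    rw [hWspoke]
    exact isPreconnected_Ioo.image _ (continuous_spokeFun e).continuousOn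
  set T : Bool → Set (GraphRealization V E ends) := fun b =>
    if b then spokeFun ends e '' Ioo τ (τ + ε) else spokeFun ends e '' Ioo (τ - ε) τ with hT
  have hTpre : ∀ b, IsPreconnected (T b) := by
    intro b
    cases b
    · simp only [hT, if_neg Bool.false_ne_true]
      exact isPreconnected_Ioo.image _ (continuous_spokeFun e).continuousOn
    · simp only [hT, if_pos rfl]
      exact isPreconnected_Ioo.image _ (continuous_spokeFun e).continuousOn
  have hspoke_ne : ∀ u : ℝ, u ∈ unitInterval → 0 < u → u < 1 → u ≠ τ →
      spokeFun ends e u ≠ x := by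
    intro u humem hu0 hu1 huτ hcontra
    have heq : spokeFun ends e u = mkR ends (Sum.inr (e, ⟨u, humem⟩)) := by
      rw [spokeFun, Set.projIcc_of_mem zero_le_one humem]
    rw [heq, hxdef] at hcontra
    have h3 := interior_class (s := ⟨u, humem⟩) hu0 hu1 hcontra
    injection h3 with h2
    exact huτ (congrArg (fun p : E × unitInterval => ((p.2 : ℝ))) h2).symm
  have hcov : W \ {x} = ⋃ b, T b := by
    apply Set.Subset.antisymm
    · rintro w ⟨hwW, hwx⟩
      rw [hWspoke] at hwW
      rcases hwW with ⟨u, ⟨hlo, hhi⟩, rfl⟩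
      have huτ : u ≠ τ := by
        intro h
        exact hwx (by rw [h, hxspoke]; rfl)
      rcases lt_or_gt_of_ne huτ with h | h
      · refine Set.mem_iUnion.mpr ⟨false, ?_⟩
        simp only [hT, if_neg Bool.false_ne_true]
        exact ⟨u, ⟨hlo, h⟩, rfl⟩
      · refine Set.mem_iUnion.mpr ⟨true, ?_⟩
        simp only [hT, if_pos rfl]
        exact ⟨u, ⟨h, hhi⟩, rfl⟩
    · refine Set.iUnion_subset ?_
      intro b
      cases b
      · simp only [hT, if_neg Bool.false_ne_true]
        rintro _ ⟨u, ⟨hlo, hhi⟩, rfl⟩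
        have humem : u ∈ unitInterval := ⟨by linarith, by linarith⟩
        constructor
        · rw [hWspoke]
          exact ⟨u, ⟨hlo, by linarith⟩, rfl⟩
        · exact hspoke_ne u humem (by linarith) (by linarith) (ne_of_lt hhi)
      · simp only [hT, if_pos rfl]
        rintro _ ⟨u, ⟨hlo, hhi⟩, rfl⟩
        have humem : u ∈ unitInterval := ⟨by linarith, by linarith⟩
        constructor
        · rw [hWspoke]
          exact ⟨u, ⟨by linarith, hhi⟩, rfl⟩
        · exact hspoke_ne u humem (by linarith) (by linarith) (ne_of_gt hlo)
  exact ⟨W, Bool, inferInstance, T, hWS, hWopen, hxW, hWconn, hTpre, hcov⟩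

lemma star_basis_R [Fintype V] [Fintype E] : StarBasis (GraphRealization V E ends) := by
  intro x S hS
  obtain ⟨z, rfl⟩ : ∃ z, mkR ends z = x := Quot.exists_rep x
  cases z with
  | inl v => exact star_vertex v S hS
  | inr p =>
    obtain ⟨e, t⟩ := p
    by_cases ht0 : t = 0
    · rw [ht0] at hS ⊢
      rw [mkR_inr_zero e rfl] at hS ⊢
      exact star_vertex _ S hS
    · by_cases ht1 : t = 1
      · rw [ht1] at hS ⊢
        rw [mkR_inr_one e rfl] at hS ⊢
        exact star_vertex _ S hS
      · exact star_interior e t ht0 ht1 S hS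


lemma t1_R [Fintype V] [Fintype E] : T1Space (GraphRealization V E ends) := by
  letI : TopologicalSpace V := ⊥
  letI : TopologicalSpace E := ⊥
  haveI : DiscreteTopology V := ⟨rfl⟩
  haveI : DiscreteTopology E := ⟨rfl⟩
  have hQM : IsQuotientMap (mkR (V := V) (E := E) ends) := isQuotientMap_quot_mk
  constructor
  intro x
  rw [← hQM.isClosed_preimage]
  obtain ⟨z, rfl⟩ : ∃ z, mkR ends z = x := Quot.exists_rep x
  have hsub : (mkR ends ⁻¹' {mkR ends z}) ⊆ {z} ∪ (Set.range (Sum.inl : V → V ⊕ E × unitInterval)) ∪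
      (Set.range (fun e : E => Sum.inr (e, (0 : unitInterval)))) ∪
      (Set.range (fun e : E => Sum.inr (e, (1 : unitInterval)))) := by
    intro w hw
    have := quot_mk_eq_iff.mp (hw : mkR ends w = mkR ends z)
    rcases this with rfl | ⟨u, hwu, -⟩
    · exact Or.inl (Or.inl (Or.inl rfl))
    · rcases hwu with rfl | ⟨e, -, rfl⟩ | ⟨e, -, rfl⟩
      · exact Or.inl (Or.inl (Or.inr ⟨u, rfl⟩))
      · exact Or.inl (Or.inr ⟨e, rfl⟩)
      · exact Or.inr ⟨e, rfl⟩
  have hfin : (mkR ends ⁻¹' {mkR ends z}).Finite :=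
    Set.Finite.subset (by
      apply Set.Finite.union
      apply Set.Finite.union
      apply Set.Finite.union
      · exact Set.finite_singleton z
      · exact Set.finite_range _
      · exact Set.finite_range _
      · exact Set.finite_range _) hsub
  exact hfin.isClosed

end Realization

lemma star_basis_of_graph (hX : IsFiniteTopGraph X) : StarBasis X := by
  obtain ⟨V, E, hV, hE, ends, ⟨φ⟩⟩ := hX
  haveI := hV; haveI := hE
  have hR : StarBasis (GraphRealization V E ends) := star_basis_R
  intro x S hS
  have hS' : φ.symm ⁻¹' S ∈ 𝓝 (φ x) :=
    φ.symm.continuous.continuousAt.preimage_mem_nhds (by rw [φ.symm_apply_apply]; exact hS)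
  obtain ⟨W, ι, hι, T, hWS, hWo, hxW, hWc, hTpre, hcov⟩ := hR (φ x) _ hS'
  have hpre : ∀ s : Set (GraphRealization V E ends), φ ⁻¹' s = φ.symm '' s := by
    intro s
    ext w
    constructor
    · intro h
      exact ⟨φ w, h, φ.symm_apply_apply w⟩
    · rintro ⟨u, hu, rfl⟩
      simpa [φ.apply_symm_apply] using hu
  refine ⟨φ ⁻¹' W, ι, hι, fun i => φ ⁻¹' T i, ?_, hWo.preimage φ.continuous, hxW, ?_, ?_, ?_⟩
  · intro w hw
    have := hWS hw
    rwa [Set.mem_preimage, φ.symm_apply_apply] at this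
  · rw [hpre]
    exact hWc.image _ φ.symm.continuous.continuousOn
  · intro i
    show IsPreconnected (φ ⁻¹' T i)
    rw [hpre]
    exact (hTpre i).image _ φ.symm.continuous.continuousOn
  · have h1 : φ ⁻¹' (W \ {φ x}) = φ ⁻¹' W \ {x} := by
      rw [Set.preimage_diff]
      congr 1
      ext w
      simp [φ.injective.eq_iff]
    rw [← h1, hcov, Set.preimage_iUnion]

lemma t1_of_graph (hX : IsFiniteTopGraph X) : T1Space X := by
  obtain ⟨V, E, hV, hE, ends, ⟨φ⟩⟩ := hX
  haveI := hV; haveI := hE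
  haveI : T1Space (GraphRealization V E ends) := t1_R
  exact φ.symm.t1Space

end Stage3

/-- Let `X` be a 2-connected finite topological graph and `x ≠ y` points
of `X`.  Then `ι_{x,y} : P_x → π₀(X ∖ {x,y})` is surjective; consequently the number of
components of `X ∖ {x,y}` is at most `deg x`, and `ι_{x,y}` is bijective iff `deg x` equals
the number of components of `X ∖ {x,y}`. -/
theorem iotaMap_surjective
    {X : Type*} [TopologicalSpace X] (hX : IsFiniteTopGraph X) (h2 : TwoConnected X)
    (x y : X) (hxy : x ≠ y) (B : BranchNbhd x) (hyB : y ∉ B.carrier) :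
    Function.Surjective (iotaMap B y hyB) ∧
    numComponents (({x, y} : Set X)ᶜ) ≤ degree x ∧
    (Function.Bijective (iotaMap B y hyB) ↔
      degree x = numComponents (({x, y} : Set X)ᶜ)) := by
  have hstar : StarBasis X := star_basis_of_graph hX
  haveI : T1Space X := t1_of_graph hX
  haveI : LocallyConnectedSpace X := hstar.locallyConnectedSpace
  haveI hfin : Finite (Divisor B) := finite_divisor hstar B
  have hdeg : degree x = Nat.card (Divisor B) := degree_eq_card B
  have hUconn : IsPreconnected ({y}ᶜ : Set X) := (h2.2.2.2 y).isPreconnected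
  have hTset : (({x, y} : Set X))ᶜ = ({y}ᶜ : Set X) \ {x} := by
    ext z
    simp only [Set.mem_compl_iff, Set.mem_insert_iff, Set.mem_singleton_iff, Set.mem_diff,
      not_or]
    tauto
  have hsurj : Function.Surjective (iotaMap B y hyB) :=
    surj_main (B.isOpen'.mem_nhds B.mem') isOpen_compl_singleton hUconn
      (by simpa using hxy) rfl hTset _
  refine ⟨hsurj, ?_, ?_⟩
  · rw [hdeg]
    exact Nat.card_le_card_of_surjective _ hsurj
  · rw [hdeg]
    constructor
    · intro hb
      exact ((Nat.bijective_iff_surjective_and_card (iotaMap B y hyB)).mp hb).2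
    · intro hc
      exact (Nat.bijective_iff_surjective_and_card (iotaMap B y hyB)).mpr ⟨hsurj, hc⟩

end TreesOfGraphs
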